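/- With the data (E, v, G, V, α) as in the context, for every k ∈ ℤ and every integer j ≥ 0, the map v^j restricts to a bijection from G_k ∩ V_α onto G_{k+j} ∩ V_{α−j}; in particular v^j(G_k ∩ V_α) = G_{k+j} ∩ V_{α−j} as submodules of E. -/

import Mathlib

/-- For every `k ∈ ℤ` and `j ≥ 0`, `v^j` restricts to a bijection from
`G_k ∩ V_α` onto `G_{k+j} ∩ V_{α−j}`; in particular
`v^j(G_k ∩ V_α) = G_{k+j} ∩ V_{α−j}`. -/
theorem stmt_15 {R E : Type*} [CommRing R] [AddCommGroup E] [Module R E]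
    (v : E →ₗ[R] E) (hv : Function.Injective v)
    (G : ℤ → Submodule R E) (hGmono : Monotone G)
    (hG0 : ∀ k : ℤ, k < 0 → G k = ⊥)
    (hGv : ∀ (m : ℤ) (n : ℕ),
      G m ⊓ LinearMap.range (v ^ n) = (G (m - n)).map (v ^ n))
    (V : ℚ → Submodule R E) (hVmono : Monotone V)
    (hVv : ∀ γ : ℚ, 0 ≤ γ → γ < 1 → ∀ k : ℕ, 1 ≤ k →
      V (γ - k) = (V γ).map (v ^ k))
    (α : ℚ) (hα0 : 0 ≤ α) (hα1 : α < 1) :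
    ∀ (k : ℤ) (j : ℕ),
      Set.BijOn (v ^ j) ((G k ⊓ V α : Submodule R E) : Set E)
        ((G (k + j) ⊓ V (α - j) : Submodule R E) : Set E) ∧
      (G k ⊓ V α).map (v ^ j) = G (k + j) ⊓ V (α - j) := by
  have hinj : ∀ j : ℕ, Function.Injective ⇑(v ^ j) := by
    intro j
    induction j with
    | zero => simpa [Module.End.one_eq_id] using Function.injective_id
    | succ n ih =>
      rw [pow_succ]
      intro a b h
      rw [Module.End.mul_apply, Module.End.mul_apply] at h
      exact hv (ih h)
  have hmap : ∀ (k : ℤ) (j : ℕ),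
      (G k ⊓ V α).map (v ^ j) = G (k + j) ⊓ V (α - j) := by
    intro k j
    have hVj : (V α).map (v ^ j) = V (α - j) := by
      rcases Nat.eq_zero_or_pos j with h0 | h1
      · subst h0; simp [Module.End.one_eq_id, Submodule.map_id]
      · exact (hVv α hα0 hα1 j h1).symm
    have hGj : (G k).map (v ^ j) = G (k + j) ⊓ LinearMap.range (v ^ j) := by
      have h := (hGv (k + j) j).symm
      simpa using h
    apply le_antisymm
    · refine le_inf ?_ ?_
      · calc (G k ⊓ V α).map (v ^ j) ≤ (G k).map (v ^ j) :=
              Submodule.map_mono inf_le_left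
          _ ≤ G (k + j) := by rw [hGj]; exact inf_le_left
      · calc (G k ⊓ V α).map (v ^ j) ≤ (V α).map (v ^ j) :=
              Submodule.map_mono inf_le_right
          _ = V (α - j) := hVj
    · intro x hx
      rw [Submodule.mem_inf] at hx
      obtain ⟨hxG, hxV⟩ := hx
      rw [← hVj] at hxV
      obtain ⟨y, hy, rfl⟩ := hxV
      have hmem : (v ^ j) y ∈ (G k).map (v ^ j) := by
        rw [hGj]; exact ⟨hxG, ⟨y, rfl⟩⟩
      obtain ⟨z, hz, hzy⟩ := hmem
      have hzy' : z = y := hinj j hzy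
      subst hzy'
      exact ⟨z, Submodule.mem_inf.mpr ⟨hz, hy⟩, rfl⟩
  intro k j
  refine ⟨?_, hmap k j⟩
  rw [← hmap k j, Submodule.map_coe]
  exact Set.InjOn.bijOn_image ((hinj j).injOn)
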